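/- Let Γ_{ij}^k be constant Christoffel symbols on ℝ² with Γ_{11}² = Γ_{12}² = 0, ρ₁₁ = ρ₁₂ = 0, and suppose (Γ₂₂²)² + 4μρ₂₂ = 0 with μ ≠ 0 and ρ₂₂ ≠ 0. Then with a = Γ₂₂²/2, the function f(x¹,x²) = x² exp(a x²) satisfies H(f)_{ij} = μ f ρ_{ij}. -/

import Mathlib

open Real

/-- Partial derivative ∂_i on ℝ². -/
noncomputable def pd (i : Fin 2) (f : ℝ × ℝ → ℝ) : ℝ × ℝ → ℝ :=
  fun p => if i = 0 then deriv (fun t => f (t, p.2)) p.1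
           else deriv (fun t => f (p.1, t)) p.2

/-- Affine Hessian H(f)_{ij} = ∂_i∂_j f − Σ_k Γ_{ij}^k ∂_k f. -/
noncomputable def Hess (Γ : Fin 2 → Fin 2 → Fin 2 → (ℝ × ℝ → ℝ))
    (f : ℝ × ℝ → ℝ) (i j : Fin 2) : ℝ × ℝ → ℝ :=
  fun p => pd i (pd j f) p - ∑ k, Γ i j k p * pd k f p

/-- Ricci tensor ρ_{jk} = ∂_i Γ_{jk}^i − ∂_j Γ_{ik}^i + Γ_{il}^i Γ_{jk}^l − Γ_{jl}^i Γ_{ik}^l. -/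
noncomputable def Ric (Γ : Fin 2 → Fin 2 → Fin 2 → (ℝ × ℝ → ℝ)) (j k : Fin 2) :
    ℝ × ℝ → ℝ :=
  fun p => (∑ i, pd i (Γ j k i) p) - (∑ i, pd j (Γ i k i) p)
    + (∑ i, ∑ l, Γ i l i p * Γ j k l p) - (∑ i, ∑ l, Γ j l i p * Γ i k l p)

/-- Symmetrized Ricci tensor. -/
noncomputable def RicS (Γ : Fin 2 → Fin 2 → Fin 2 → (ℝ × ℝ → ℝ)) (i j : Fin 2) :
    ℝ × ℝ → ℝ :=
  fun p => (Ric Γ i j p + Ric Γ j i p) / 2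

/-- Covariant derivative of the Ricci tensor: (∇ρ)(i,j;k). -/
noncomputable def nabRic (Γ : Fin 2 → Fin 2 → Fin 2 → (ℝ × ℝ → ℝ)) (i j k : Fin 2) :
    ℝ × ℝ → ℝ :=
  fun p => pd k (Ric Γ i j) p - ∑ l, Γ k i l p * Ric Γ l j p
    - ∑ l, Γ k j l p * Ric Γ i l p

/-- Type B Christoffel symbols Γ_{ij}^k = C_{ij}^k / x¹. -/
noncomputable def ΓB (C : Fin 2 → Fin 2 → Fin 2 → ℝ) :
    Fin 2 → Fin 2 → Fin 2 → (ℝ × ℝ → ℝ) :=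
  fun i j k p => C i j k / p.1

/-- Type A, discriminant-zero case: f = x² exp(a x²) with a = Γ₂₂²/2 solves
H(f) = μ f ρ when (Γ₂₂²)² + 4 μ ρ₂₂ = 0. -/
lemma d1 (a t : ℝ) : deriv (fun s => s * Real.exp (a*s)) t = Real.exp (a*t) * (1 + a*t) := by
  have h := (hasDerivAt_id t).mul (((hasDerivAt_id t).const_mul a).exp)
  simp only [id] at h
  rw [show deriv (fun s => s * Real.exp (a*s)) t = _ from h.deriv]; ring

lemma d2 (a t : ℝ) : deriv (fun s => Real.exp (a*s) * (1 + a*s)) t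
    = Real.exp (a*t) * (2*a + a^2*t) := by
  have h := (((hasDerivAt_id t).const_mul a).exp).mul
      ((hasDerivAt_const t 1).add ((hasDerivAt_id t).const_mul a))
  simp only [id] at h
  rw [show deriv (fun s => Real.exp (a*s) * (1 + a*s)) t = _ from h.deriv]
  simp only [Pi.add_apply]; ring

lemma pd0_of (g : ℝ × ℝ → ℝ) (c : ℝ → ℝ) (h : ∀ q, g q = c q.2) (p : ℝ × ℝ) :
    pd 0 g p = 0 := by
  simp only [pd, if_pos rfl]
  have : (fun t => g (t, p.2)) = fun _ => c p.2 := funext fun t => h _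
  rw [this, deriv_const]
  simp

lemma pd1_of (g : ℝ × ℝ → ℝ) (c : ℝ → ℝ) (h : ∀ q, g q = c q.2) (p : ℝ × ℝ) :
    pd 1 g p = deriv c p.2 := by
  simp only [pd]
  rw [if_neg (by decide)]
  congr 1
  exact funext fun t => h _

theorem typeA_degenerate_solution
    (Γc : Fin 2 → Fin 2 → Fin 2 → ℝ)
    (hsym : ∀ i j k, Γc i j k = Γc j i k)
    (h1 : Γc 0 0 1 = 0) (h2 : Γc 0 1 1 = 0)
    (ρ22 μ : ℝ) (hμ : μ ≠ 0) (hρ : ρ22 ≠ 0)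
    (hdisc : (Γc 1 1 1) ^ 2 + 4 * μ * ρ22 = 0) :
    ∀ i j : Fin 2, ∀ p : ℝ × ℝ,
      Hess (fun i j k _ => Γc i j k)
          (fun p => p.2 * Real.exp ((Γc 1 1 1 / 2) * p.2)) i j p
        = μ * (p.2 * Real.exp ((Γc 1 1 1 / 2) * p.2))
            * (if i = 1 ∧ j = 1 then ρ22 else 0) := by
  intro i j p
  set a : ℝ := Γc 1 1 1 / 2 with ha
  set f : ℝ × ℝ → ℝ := fun p => p.2 * Real.exp (a * p.2) with hf
  have hfc : ∀ q : ℝ × ℝ, f q = (fun t => t * Real.exp (a * t)) q.2 := fun q => rfl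
  have hpd0 : ∀ q : ℝ × ℝ, pd 0 f q = 0 := fun q => pd0_of f (fun t => t * Real.exp (a * t)) hfc q
  have hpd1 : ∀ q : ℝ × ℝ, pd 1 f q = Real.exp (a * q.2) * (1 + a * q.2) := by
    intro q; rw [pd1_of f (fun t => t * Real.exp (a * t)) hfc q, d1]
  have hdd00 : pd 0 (pd 0 f) p = 0 :=
    pd0_of _ (fun _ => 0) (fun q => hpd0 q) p
  have hdd01 : pd 0 (pd 1 f) p = 0 :=
    pd0_of _ (fun t => Real.exp (a * t) * (1 + a * t)) (fun q => hpd1 q) p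
  have hdd10 : pd 1 (pd 0 f) p = 0 := by
    rw [pd1_of _ (fun _ => (0:ℝ)) (fun q => hpd0 q) p, deriv_const]
  have hdd11 : pd 1 (pd 1 f) p = Real.exp (a * p.2) * (2*a + a^2*p.2) := by
    rw [pd1_of _ (fun t => Real.exp (a * t) * (1 + a * t)) (fun q => hpd1 q) p, d2]
  have h21 : Γc 1 0 1 = 0 := by rw [hsym]; exact h2
  have key : a ^ 2 = -(μ * ρ22) := by
    have h2a : Γc 1 1 1 = 2 * a := by rw [ha]; ring
    rw [h2a] at hdisc; nlinarith
  have hi : i = 0 ∨ i = 1 := by omega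
  have hj : j = 0 ∨ j = 1 := by omega
  rcases hi with hi | hi <;> rcases hj with hj | hj <;> subst hi <;> subst hj <;>
    simp only [Hess, Fin.sum_univ_two, hpd0, hpd1, hdd00, hdd01, hdd10, hdd11,
      mul_zero, zero_mul, h1, h2, h21]
  · norm_num
  · norm_num
  · norm_num
  · have h2a : Γc 1 1 1 = 2 * a := by rw [ha]; ring
    rw [if_pos ⟨trivial, trivial⟩, h2a]
    linear_combination (-(p.2 * Real.exp (a * p.2))) * key
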